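/- Let λ be a partition lying in 𝒫_C, with distinct even parts 2x_1 > … > 2x_ℓ of multiplicities r_1, …, r_ℓ, and let T be an admissible domino tableau of type C and shape λ. Then the partition of B_λ = {0, 2x_1, …, 2x_ℓ} into the fibers of b_T over the open clusters of T is an even NCP of B_λ: it is a noncrossing partition, 0 lies in the fiber b_T^{-1}(b_T(0)), and for every fiber L not containing 0 the sum Σ_{j : 2x_j ∈ L} r_j is even. -/

import Mathlib

/-- A domino in the plane (rows and columns numbered from 1, matrix style):
`H i j` is the horizontal domino with boxes `(i,j)` and `(i,j+1)`;
`V i j` is the vertical domino with boxes `(i,j)` and `(i+1,j)`. -/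
inductive Domino : Type
  | H : ℕ → ℕ → Domino
  | V : ℕ → ℕ → Domino
deriving DecidableEq

/-- The two boxes of a domino. -/
def Domino.boxes : Domino → Finset (ℕ × ℕ)
  | .H i j => {(i, j), (i, j + 1)}
  | .V i j => {(i, j), (i + 1, j)}

/-- The boxes of a domino have row and column indices `≥ 1`. -/
def Domino.valid : Domino → Prop
  | .H i j => 1 ≤ i ∧ 1 ≤ j
  | .V i j => 1 ≤ i ∧ 1 ≤ j

/-- A domino of type `(I+)` (type C): vertical, lying in an even column. -/
def Domino.IsIPlus : Domino → Prop
  | .H _ _ => False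
  | .V _ j => j % 2 = 0

/-- A domino tableau with `n` dominoes is encoded as a list of dominoes **in
decreasing order of labels**: the head has label `n` and the last element has
label `1`; `T^i` (dominoes with labels `≤ i`) is `T.drop (n - i)`. -/
def boxesOf (T : List Domino) : Finset (ℕ × ℕ) :=
  T.foldr (fun d s => d.boxes ∪ s) ∅

/-- The length of row `i` of the tableau `T`. -/
def rowLen (T : List Domino) (i : ℕ) : ℕ :=
  ((boxesOf T).filter (fun p => p.1 = i)).card

/-- The shape of `T`: the multiset of (positive) row lengths, i.e. the partition
whose Young diagram is the set of boxes of `T`. -/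
def shapeOf (T : List Domino) : Multiset ℕ :=
  ((boxesOf T).image Prod.fst).val.map (rowLen T)

/-- The set of parts of the shape of `T`. -/
def partsFinset (T : List Domino) : Finset ℕ :=
  ((boxesOf T).image Prod.fst).image (rowLen T)

/-- The label of the box `p` in `T` (the head of `T` has the largest label
`T.length`; boxes outside `T` get the junk value `0`). -/
def labelOf : List Domino → ℕ × ℕ → ℕ
  | [], _ => 0
  | d :: rest, p => if p ∈ d.boxes then rest.length + 1 else labelOf rest p

/-- Van Leeuwen's clusters of an (admissible, type C) domino tableau `T`, by induction
on the number of dominoes. `(clusterData T).1` is the set of clusters, each cluster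
being the `Finset` of the labels of its dominoes, and `(clusterData T).2` is the map
`b_T`, sending each even number `2i` (an element of `B_λ = {0} ∪ {even parts}`) to a
cluster. If `T = [d]`, there is one cluster and `b_T` is constant. For `T = d :: rest`
with `d` the domino of maximal label `n`: if `d` is of type (N) in columns `2i−1, 2i`,
the clusters `b'(2i−2)`, `d` and (when `2i` is a part of the shape of `rest`) `b'(2i)`
merge into a new cluster; if `d` is of type (I+) in column `2i`, `d` and (when `2i` is
a part) `b'(2i)` merge; if `d` is of type (I−) in column `2i+1`, `d` and `b'(2i)`
merge. The untouched clusters and values of `b'` persist, and all members of `B_λ`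
previously sent to a merged cluster (as well as `2i`, in the (N) and (I+) cases) are
sent to the new cluster. -/
def clusterData : List Domino → Finset (Finset ℕ) × (ℕ → Finset ℕ)
  | [] => (∅, fun _ => ∅)
  | [_] => ({({1} : Finset ℕ)}, fun _ => ({1} : Finset ℕ))
  | d :: rest =>
      let P := clusterData rest
      let n := rest.length + 1
      match d with
      | .H _ j =>
          if j % 2 = 1 then
            -- type (N), columns j = 2i−1 and c = 2i
            let c := j + 1
            let olds : Finset (Finset ℕ) :=
              if c ∈ partsFinset rest then {P.2 (c - 2), P.2 c} else {P.2 (c - 2)}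
            let newC : Finset ℕ :=
              insert n (if c ∈ partsFinset rest then P.2 (c - 2) ∪ P.2 c else P.2 (c - 2))
            ((P.1 \ olds) ∪ {newC},
             fun m => if P.2 m ∈ olds ∨ m = c then newC else P.2 m)
          else P
      | .V _ j =>
          if j % 2 = 0 then
            -- type (I+), column c = 2i
            let c := j
            if c ∈ partsFinset rest then
              let newC : Finset ℕ := insert n (P.2 c)
              ((P.1 \ {P.2 c}) ∪ {newC},
               fun m => if P.2 m = P.2 c ∨ m = c then newC else P.2 m)
            else
              let newC : Finset ℕ := ({n} : Finset ℕ)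
              (P.1 ∪ {newC}, fun m => if m = c then newC else P.2 m)
          else
            -- type (I−), column j = 2i+1, merge with b'(2i)
            let c := j - 1
            let newC : Finset ℕ := insert n (P.2 c)
            ((P.1 \ {P.2 c}) ∪ {newC},
             fun m => if P.2 m = P.2 c then newC else P.2 m)

/-- The set of boxes is a Young diagram (rows/columns from 1, left- and top-justified). -/
def IsYoungDiagramSet (S : Finset (ℕ × ℕ)) : Prop :=
  (∀ p ∈ S, 1 ≤ p.1 ∧ 1 ≤ p.2) ∧
  (∀ i j, (i, j + 1) ∈ S → 1 ≤ j → (i, j) ∈ S) ∧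
  (∀ i j, (i + 1, j) ∈ S → 1 ≤ i → (i, j) ∈ S)

/-- `T` (a list of dominoes in decreasing label order) is a standard domino tableau:
the dominoes are pairwise disjoint, their union is a Young diagram, and the labels
weakly increase along rows and columns. -/
def IsStandardDT (T : List Domino) : Prop :=
  (∀ d ∈ T, d.valid) ∧
  T.Pairwise (fun d d' => Disjoint d.boxes d'.boxes) ∧
  IsYoungDiagramSet (boxesOf T) ∧
  (∀ i j, (i, j) ∈ boxesOf T → (i + 1, j) ∈ boxesOf T →
    labelOf T (i, j) ≤ labelOf T (i + 1, j)) ∧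
  (∀ i j, (i, j) ∈ boxesOf T → (i, j + 1) ∈ boxesOf T →
    labelOf T (i, j) ≤ labelOf T (i, j + 1))

/-- A partition is of type C: it is a partition of an even number in which every odd
part has even multiplicity. -/
def IsTypeCShape (μ : Multiset ℕ) : Prop :=
  Even μ.sum ∧ ∀ m, Odd m → Even (μ.count m)

/-- `T` is an admissible domino tableau of type C: it is standard, and the shape of
every `T^i` (here: of every suffix of the list) is of type C. -/
def IsAdmissibleC (T : List Domino) : Prop :=
  IsStandardDT T ∧ ∀ k, IsTypeCShape (shapeOf (T.drop k))

/-- `P` is a partition of the finite set `B ⊆ ℕ` into nonempty blocks. -/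
def IsPartitionOf (B : Finset ℕ) (P : Finset (Finset ℕ)) : Prop :=
  (∀ L ∈ P, L.Nonempty) ∧ (∀ L ∈ P, L ⊆ B) ∧ ∀ b ∈ B, ∃! L, L ∈ P ∧ b ∈ L

/-- The noncrossing condition on the blocks. -/
def PairwiseNoncrossing (P : Finset (Finset ℕ)) : Prop :=
  ∀ L ∈ P, ∀ L' ∈ P, L ≠ L' →
    ∀ a ∈ L, ∀ b ∈ L, ∀ c ∈ L', ∀ d ∈ L', a ≤ b → c ≤ d →
      Finset.Icc a b ∩ Finset.Icc c d = ∅ ∨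
      Finset.Icc a b ⊆ Finset.Icc c d ∨ Finset.Icc c d ⊆ Finset.Icc a b

/-- A noncrossing partition (NCP) of the finite set `B ⊆ ℕ`. -/
def IsNCP (B : Finset ℕ) (P : Finset (Finset ℕ)) : Prop :=
  IsPartitionOf B P ∧ PairwiseNoncrossing P

/-- `B_λ = {0, 2x₁, …, 2x_ℓ}` (indices `1, …, ℓ`). -/
def Blam (ℓ : ℕ) (x : ℕ → ℕ) : Finset ℕ :=
  insert 0 ((Finset.Icc 1 ℓ).image (fun i => 2 * x i))

/-- An even NCP of `B_λ`: an NCP such that every block `L` not containing `0` has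
`r(L) = Σ_{j : 2x_j ∈ L} r_j` even (the block `L₀` containing `0` is unrestricted). -/
def IsEvenNCP (ℓ : ℕ) (x r : ℕ → ℕ) (P : Finset (Finset ℕ)) : Prop :=
  IsNCP (Blam ℓ x) P ∧
    ∀ L ∈ P, 0 ∉ L →
      Even (∑ j ∈ (Finset.Icc 1 ℓ).filter (fun j => 2 * x j ∈ L), r j)

/-- The partition of `B_λ` into the fibers of the cluster map `b_T` (equivalently, over
the open clusters of `T`, which are exactly the clusters in the image of `b_T`). -/
def fibersOf (ℓ : ℕ) (x : ℕ → ℕ) (T : List Domino) : Finset (Finset ℕ) :=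
  (Blam ℓ x).image
    (fun v => (Blam ℓ x).filter (fun w => (clusterData T).2 w = (clusterData T).2 v))

/-! ### Basic lemmas -/

abbrev bcl (T : List Domino) : ℕ → Finset ℕ := (clusterData T).2

lemma mem_boxesOf {p : ℕ × ℕ} : ∀ {L : List Domino}, p ∈ boxesOf L ↔ ∃ d ∈ L, p ∈ d.boxes
  | [] => by simp [boxesOf]
  | d :: L => by
      simp only [boxesOf, List.foldr_cons, Finset.mem_union, List.mem_cons]
      rw [show (L.foldr (fun d s => d.boxes ∪ s) ∅) = boxesOf L from rfl]
      rw [mem_boxesOf (L := L)]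
      constructor
      · rintro (h | ⟨d', hd', hp⟩)
        · exact ⟨d, Or.inl rfl, h⟩
        · exact ⟨d', Or.inr hd', hp⟩
      · rintro ⟨d', (rfl | hd'), hp⟩
        · exact Or.inl hp
        · exact Or.inr ⟨d', hd', hp⟩

lemma boxesOf_cons (d : Domino) (L : List Domino) :
    boxesOf (d :: L) = d.boxes ∪ boxesOf L := rfl

lemma boxesOf_subset_cons (d : Domino) (L : List Domino) :
    boxesOf L ⊆ boxesOf (d :: L) := by
  rw [boxesOf_cons]; exact Finset.subset_union_right

lemma labelOf_le_length : ∀ (L : List Domino) (p : ℕ × ℕ), labelOf L p ≤ L.length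
  | [], p => by simp [labelOf]
  | d :: L, p => by
      simp only [labelOf, List.length_cons]
      split
      · exact le_rfl
      · exact (labelOf_le_length L p).trans (Nat.le_succ _)

lemma labelOf_cons_of_mem {d : Domino} {L : List Domino} {p : ℕ × ℕ} (h : p ∈ d.boxes) :
    labelOf (d :: L) p = L.length + 1 := by simp [labelOf, h]

lemma labelOf_cons_of_not_mem {d : Domino} {L : List Domino} {p : ℕ × ℕ} (h : p ∉ d.boxes) :
    labelOf (d :: L) p = labelOf L p := by simp [labelOf, h]

/-- the head domino is disjoint from the rest of the boxes -/
lemma head_disjoint_rest {d : Domino} {L : List Domino}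
    (h : (d :: L).Pairwise (fun d d' => Disjoint d.boxes d'.boxes)) {p : ℕ × ℕ}
    (hp : p ∈ d.boxes) : p ∉ boxesOf L := by
  rw [List.pairwise_cons] at h
  rw [mem_boxesOf]
  rintro ⟨d', hd', hp'⟩
  have := (h.1 d' hd').le_bot (by simp [Finset.mem_inter, hp, hp'] : p ∈ d.boxes ∩ d'.boxes)
  simp at this

/-! ### Characterization of the cluster map of a cons -/

lemma b_H_even {i j : ℕ} {R : List Domino} (hR : R ≠ []) (hj : j % 2 = 0) :
    clusterData (.H i j :: R) = clusterData R := by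
  obtain ⟨e, R', rfl⟩ := List.exists_cons_of_ne_nil hR
  have key : clusterData (.H i j :: e :: R') =
      (if j % 2 = 1 then
        ((clusterData (e :: R')).1 \ (if j+1 ∈ partsFinset (e :: R') then
            {(clusterData (e :: R')).2 (j + 1 - 2), (clusterData (e :: R')).2 (j+1)} else
            {(clusterData (e :: R')).2 (j + 1 - 2)}) ∪
          {insert ((e :: R').length + 1) (if j+1 ∈ partsFinset (e :: R') then
            (clusterData (e :: R')).2 (j + 1 - 2) ∪ (clusterData (e :: R')).2 (j+1) else
            (clusterData (e :: R')).2 (j + 1 - 2))},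
         fun m => if (clusterData (e :: R')).2 m ∈ (if j+1 ∈ partsFinset (e :: R') then
            {(clusterData (e :: R')).2 (j + 1 - 2), (clusterData (e :: R')).2 (j+1)} else
            {(clusterData (e :: R')).2 (j + 1 - 2)}) ∨ m = j + 1 then
            insert ((e :: R').length + 1) (if j+1 ∈ partsFinset (e :: R') then
            (clusterData (e :: R')).2 (j + 1 - 2) ∪ (clusterData (e :: R')).2 (j+1) else
            (clusterData (e :: R')).2 (j + 1 - 2)) else (clusterData (e :: R')).2 m)
       else clusterData (e :: R')) := rfl
  rw [key, if_neg (by omega)]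

lemma b_H_odd {i j : ℕ} {R : List Domino} (hR : R ≠ []) (hj : j % 2 = 1) (m : ℕ) :
    bcl (.H i j :: R) m =
      if bcl R m = bcl R (j-1) ∨ (j+1 ∈ partsFinset R ∧ bcl R m = bcl R (j+1)) ∨ m = j + 1
      then insert (R.length + 1) (if j+1 ∈ partsFinset R then bcl R (j-1) ∪ bcl R (j+1)
        else bcl R (j-1))
      else bcl R m := by
  obtain ⟨e, R', rfl⟩ := List.exists_cons_of_ne_nil hR
  have key : clusterData (.H i j :: e :: R') =
      (if j % 2 = 1 then
        ((clusterData (e :: R')).1 \ (if j+1 ∈ partsFinset (e :: R') then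
            {(clusterData (e :: R')).2 (j + 1 - 2), (clusterData (e :: R')).2 (j+1)} else
            {(clusterData (e :: R')).2 (j + 1 - 2)}) ∪
          {insert ((e :: R').length + 1) (if j+1 ∈ partsFinset (e :: R') then
            (clusterData (e :: R')).2 (j + 1 - 2) ∪ (clusterData (e :: R')).2 (j+1) else
            (clusterData (e :: R')).2 (j + 1 - 2))},
         fun m => if (clusterData (e :: R')).2 m ∈ (if j+1 ∈ partsFinset (e :: R') then
            {(clusterData (e :: R')).2 (j + 1 - 2), (clusterData (e :: R')).2 (j+1)} else
            {(clusterData (e :: R')).2 (j + 1 - 2)}) ∨ m = j + 1 then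
            insert ((e :: R').length + 1) (if j+1 ∈ partsFinset (e :: R') then
            (clusterData (e :: R')).2 (j + 1 - 2) ∪ (clusterData (e :: R')).2 (j+1) else
            (clusterData (e :: R')).2 (j + 1 - 2)) else (clusterData (e :: R')).2 m)
       else clusterData (e :: R')) := rfl
  rw [show bcl (.H i j :: e :: R') m = (clusterData (.H i j :: e :: R')).2 m from rfl,
    key, if_pos hj]
  have h2 : j + 1 - 2 = j - 1 := by omega
  dsimp only
  simp only [h2]
  by_cases hp : j + 1 ∈ partsFinset (e :: R')
  · simp only [if_pos hp, Finset.mem_insert, Finset.mem_singleton]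
    congr 1
    simp only [eq_iff_iff, bcl]
    tauto
  · simp only [if_neg hp, Finset.mem_singleton]
    congr 1
    simp only [eq_iff_iff, bcl]
    constructor
    · rintro (h | h)
      · exact Or.inl h
      · exact Or.inr (Or.inr h)
    · rintro (h | ⟨h1, h2⟩ | h)
      · exact Or.inl h
      · exact absurd h1 hp
      · exact Or.inr h

lemma b_V_even_part {i j : ℕ} {R : List Domino} (hR : R ≠ []) (hj : j % 2 = 0)
    (hp : j ∈ partsFinset R) (m : ℕ) :
    bcl (.V i j :: R) m =
      if bcl R m = bcl R j then insert (R.length + 1) (bcl R j) else bcl R m := by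
  obtain ⟨e, R', rfl⟩ := List.exists_cons_of_ne_nil hR
  have key : clusterData (.V i j :: e :: R') =
      (if j % 2 = 0 then
        (if j ∈ partsFinset (e :: R') then
          ((clusterData (e :: R')).1 \ {(clusterData (e :: R')).2 j} ∪
             {insert ((e :: R').length + 1) ((clusterData (e :: R')).2 j)},
           fun m => if (clusterData (e :: R')).2 m = (clusterData (e :: R')).2 j ∨ m = j then
            insert ((e :: R').length + 1) ((clusterData (e :: R')).2 j) else (clusterData (e :: R')).2 m)
         else
          ((clusterData (e :: R')).1 ∪ {({(e :: R').length + 1} : Finset ℕ)},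
           fun m => if m = j then ({(e :: R').length + 1} : Finset ℕ) else (clusterData (e :: R')).2 m))
       else
        ((clusterData (e :: R')).1 \ {(clusterData (e :: R')).2 (j-1)} ∪
           {insert ((e :: R').length + 1) ((clusterData (e :: R')).2 (j-1))},
         fun m => if (clusterData (e :: R')).2 m = (clusterData (e :: R')).2 (j-1) then
          insert ((e :: R').length + 1) ((clusterData (e :: R')).2 (j-1)) else (clusterData (e :: R')).2 m)) := rfl
  rw [show bcl (.V i j :: e :: R') m = (clusterData (.V i j :: e :: R')).2 m from rfl,
    key, if_pos hj, if_pos hp]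
  dsimp only
  congr 1
  simp only [eq_iff_iff, bcl]
  constructor
  · rintro (h | rfl)
    · exact h
    · rfl
  · exact Or.inl

lemma b_V_even_nopart {i j : ℕ} {R : List Domino} (hR : R ≠ []) (hj : j % 2 = 0)
    (hp : j ∉ partsFinset R) (m : ℕ) :
    bcl (.V i j :: R) m =
      if m = j then ({R.length + 1} : Finset ℕ) else bcl R m := by
  obtain ⟨e, R', rfl⟩ := List.exists_cons_of_ne_nil hR
  have key : clusterData (.V i j :: e :: R') =
      (if j % 2 = 0 then
        (if j ∈ partsFinset (e :: R') then
          ((clusterData (e :: R')).1 \ {(clusterData (e :: R')).2 j} ∪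
             {insert ((e :: R').length + 1) ((clusterData (e :: R')).2 j)},
           fun m => if (clusterData (e :: R')).2 m = (clusterData (e :: R')).2 j ∨ m = j then
            insert ((e :: R').length + 1) ((clusterData (e :: R')).2 j) else (clusterData (e :: R')).2 m)
         else
          ((clusterData (e :: R')).1 ∪ {({(e :: R').length + 1} : Finset ℕ)},
           fun m => if m = j then ({(e :: R').length + 1} : Finset ℕ) else (clusterData (e :: R')).2 m))
       else
        ((clusterData (e :: R')).1 \ {(clusterData (e :: R')).2 (j-1)} ∪
           {insert ((e :: R').length + 1) ((clusterData (e :: R')).2 (j-1))},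
         fun m => if (clusterData (e :: R')).2 m = (clusterData (e :: R')).2 (j-1) then
          insert ((e :: R').length + 1) ((clusterData (e :: R')).2 (j-1)) else (clusterData (e :: R')).2 m)) := rfl
  rw [show bcl (.V i j :: e :: R') m = (clusterData (.V i j :: e :: R')).2 m from rfl,
    key, if_pos hj, if_neg hp]

lemma b_V_odd {i j : ℕ} {R : List Domino} (hR : R ≠ []) (hj : j % 2 = 1) (m : ℕ) :
    bcl (.V i j :: R) m =
      if bcl R m = bcl R (j-1) then insert (R.length + 1) (bcl R (j-1)) else bcl R m := by
  obtain ⟨e, R', rfl⟩ := List.exists_cons_of_ne_nil hR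
  have key : clusterData (.V i j :: e :: R') =
      (if j % 2 = 0 then
        (if j ∈ partsFinset (e :: R') then
          ((clusterData (e :: R')).1 \ {(clusterData (e :: R')).2 j} ∪
             {insert ((e :: R').length + 1) ((clusterData (e :: R')).2 j)},
           fun m => if (clusterData (e :: R')).2 m = (clusterData (e :: R')).2 j ∨ m = j then
            insert ((e :: R').length + 1) ((clusterData (e :: R')).2 j) else (clusterData (e :: R')).2 m)
         else
          ((clusterData (e :: R')).1 ∪ {({(e :: R').length + 1} : Finset ℕ)},
           fun m => if m = j then ({(e :: R').length + 1} : Finset ℕ) else (clusterData (e :: R')).2 m))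
       else
        ((clusterData (e :: R')).1 \ {(clusterData (e :: R')).2 (j-1)} ∪
           {insert ((e :: R').length + 1) ((clusterData (e :: R')).2 (j-1))},
         fun m => if (clusterData (e :: R')).2 m = (clusterData (e :: R')).2 (j-1) then
          insert ((e :: R').length + 1) ((clusterData (e :: R')).2 (j-1)) else (clusterData (e :: R')).2 m)) := rfl
  rw [show bcl (.V i j :: e :: R') m = (clusterData (.V i j :: e :: R')).2 m from rfl,
    key, if_neg (by omega)]

/-! ### labels in clusters are bounded by the length -/

lemma cluster_bound : ∀ (T : List Domino) {m k : ℕ}, k ∈ bcl T m → k ≤ T.length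
  | [], m, k => by simp [bcl, clusterData]
  | [d], m, k => by simp [bcl, clusterData]; omega
  | d :: e :: rest, m, k => by
      intro hk
      have IH : ∀ {m k : ℕ}, k ∈ bcl (e :: rest) m → k ≤ (e :: rest).length :=
        fun h => cluster_bound (e :: rest) h
      have hR : (e :: rest) ≠ [] := by simp
      have hlen : (d :: e :: rest).length = (e :: rest).length + 1 := rfl
      rw [hlen]
      cases d with
      | H i j =>
          rcases Nat.even_or_odd j with hj | hj
          · rw [show bcl (.H i j :: e :: rest) = bcl (e :: rest) from by
              rw [bcl, b_H_even hR (Nat.even_iff.mp hj)]] at hk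
            exact (IH hk).trans (by omega)
          · rw [b_H_odd hR (Nat.odd_iff.mp hj)] at hk
            split at hk
            · simp only [Finset.mem_insert] at hk
              rcases hk with rfl | hk
              · omega
              · split at hk
                · rcases Finset.mem_union.mp hk with h | h
                  · exact (IH h).trans (by omega)
                  · exact (IH h).trans (by omega)
                · exact (IH hk).trans (by omega)
            · exact (IH hk).trans (by omega)
      | V i j =>
          rcases Nat.even_or_odd j with hj | hj
          · by_cases hp : j ∈ partsFinset (e :: rest)
            · rw [b_V_even_part hR (Nat.even_iff.mp hj) hp] at hk
              split at hk
              · simp only [Finset.mem_insert] at hk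
                rcases hk with rfl | hk
                · omega
                · exact (IH hk).trans (by omega)
              · exact (IH hk).trans (by omega)
            · rw [b_V_even_nopart hR (Nat.even_iff.mp hj) hp] at hk
              split at hk
              · simp only [Finset.mem_singleton] at hk; omega
              · exact (IH hk).trans (by omega)
          · rw [b_V_odd hR (Nat.odd_iff.mp hj)] at hk
            split at hk
            · simp only [Finset.mem_insert] at hk
              rcases hk with rfl | hk
              · omega
              · exact (IH hk).trans (by omega)
            · exact (IH hk).trans (by omega)

lemma newC_ne {R : List Domino} {A : Finset ℕ} (hA : R.length + 1 ∈ A) (m : ℕ) :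
    A ≠ bcl R m := by
  intro h
  have := cluster_bound R (m := m) (k := R.length + 1) (h ▸ hA)
  omega
/-! ### The noncrossing invariant -/

/-- Noncrossing property of the fibers of `f` on even numbers. -/
def NCb (f : ℕ → Finset ℕ) : Prop :=
  ∀ a x y z : ℕ, a % 2 = 0 → x % 2 = 0 → y % 2 = 0 → z % 2 = 0 →
    a < x → x < y → y < z → f a = f y → f x = f z → f a = f x

lemma same_NC {f g : ℕ → Finset ℕ} (h : ∀ u v, (g u = g v) ↔ (f u = f v)) (hf : NCb f) :
    NCb g := by
  intro a x y z ea ex ey ez h1 h2 h3 hay hxz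
  rw [h] at hay hxz ⊢
  exact hf a x y z ea ex ey ez h1 h2 h3 hay hxz

lemma fib_of_mergeself {f g : ℕ → Finset ℕ} {c n : ℕ} (hbig : ∀ m, n ∉ f m)
    (hg : ∀ m, g m = if f m = f c then insert n (f c) else f m) (u v : ℕ) :
    g u = g v ↔ f u = f v := by
  have hne : ∀ m, insert n (f c) ≠ f m := fun m h => hbig m (h ▸ Finset.mem_insert_self n _)
  rw [hg u, hg v]
  split_ifs with h1 h2 h2
  · constructor
    · intro _; rw [h1, h2]
    · intro _; rfl
  · constructor
    · intro h; exact absurd h (hne v)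
    · intro h; exact absurd (h.symm.trans h1) h2
  · constructor
    · intro h; exact absurd h.symm (hne u)
    · intro h; exact absurd (h.trans h2) h1
  · exact Iff.rfl

lemma split_NC {f g : ℕ → Finset ℕ} {c : ℕ} {C : Finset ℕ} (hC : ∀ u, C ≠ f u)
    (hg : ∀ u, g u = if u = c then C else f u) (hf : NCb f) : NCb g := by
  have key : ∀ u v : ℕ, u ≠ v → g u = g v → u ≠ c ∧ v ≠ c ∧ f u = f v := by
    intro u v huv h
    rw [hg u, hg v] at h
    split_ifs at h with h1 h2 h2
    · exact absurd (h1.trans h2.symm) huv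
    · exact absurd h (hC v)
    · exact absurd h.symm (hC u)
    · exact ⟨h1, h2, h⟩
  intro a x y z ea ex ey ez h1 h2 h3 hay hxz
  obtain ⟨hac, hyc, fay⟩ := key a y (by omega) hay
  obtain ⟨hxc, hzc, fxz⟩ := key x z (by omega) hxz
  rw [hg a, hg x, if_neg hac, if_neg hxc]
  exact hf a x y z ea ex ey ez h1 h2 h3 fay fxz

lemma merge_NC {f g : ℕ → Finset ℕ} {p q : ℕ} {cond : Prop} {C : Finset ℕ} {M : ℕ → Prop}
    (hM : ∀ u, M u ↔ (f u = f p ∨ (cond ∧ f u = f q) ∨ u = q))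
    (hp2 : p % 2 = 0) (hq2 : q = p + 2) (hC : ∀ u, C ≠ f u)
    (hgM : ∀ u, M u → g u = C) (hgN : ∀ u, ¬ M u → g u = f u)
    (hf : NCb f) : NCb g := by
  have hq2' : q % 2 = 0 := by omega
  intro a x y z ea ex ey ez h1 h2 h3 hay hxz
  by_cases hMa : M a <;> by_cases hMx : M x
  · rw [hgM a hMa, hgM x hMx]
  · -- a, y merged; x, z not
    exfalso
    have hMy : M y := by
      by_contra h
      rw [hgM a hMa, hgN y h] at hay
      exact hC y hay
    have hMz : ¬ M z := by
      intro h
      rw [hgN x hMx, hgM z h] at hxz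
      exact hC x hxz.symm
    have fxz : f x = f z := by rw [← hgN x hMx, ← hgN z hMz]; exact hxz
    rw [hM] at hMx hMz
    push_neg at hMx hMz
    obtain ⟨hx1, hx2, hx3⟩ := hMx
    obtain ⟨hz1, hz2, hz3⟩ := hMz
    have hxp : x ≠ p := fun h => hx1 (by rw [h])
    have hzp : z ≠ p := fun h => hz1 (by rw [h])
    rcases (hM a).mp hMa with ha | ⟨hca, ha⟩ | ha <;>
      rcases (hM y).mp hMy with hy | ⟨hcy, hy⟩ | hy
    · exact hx1 ((hf a x y z ea ex ey ez h1 h2 h3 (ha.trans hy.symm) fxz).symm.trans ha)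
    · by_cases hxq : x < p
      · by_cases hzq : z < p
        · exact hx2 hcy ((hf x y z q ex ey ez hq2' h2 h3 (by omega) fxz hy).trans hy)
        · have hzq' : q < z := by omega
          exact hx1 ((hf a x p z ea ex hp2 ez h1 (by omega) (by omega) ha fxz).symm.trans ha)
      · have hxq' : q < x := by omega
        exact hx2 hcy ((hf q x y z hq2' ex ey ez (by omega) h2 h3 hy.symm fxz).symm)
    · -- y = q
      subst hy
      have hxq : x < p := by omega
      exact hx1 ((hf a x p z ea ex hp2 ez h1 (by omega) (by omega) ha fxz).symm.trans ha)
    · by_cases hxq : x < p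
      · by_cases hzq : z < p
        · exact hx1 ((hf x y z p ex ey ez hp2 h2 h3 (by omega) fxz hy).trans hy)
        · have hzq' : q < z := by omega
          exact hx2 hca (((hf a x q z ea ex hq2' ez h1 (by omega) (by omega) ha fxz).symm.trans ha))
      · have hxq' : q < x := by omega
        exact hx1 ((hf p x y z hp2 ex ey ez (by omega) h2 h3 hy.symm fxz).symm)
    · exact hx2 hca ((hf a x y z ea ex ey ez h1 h2 h3 (ha.trans hy.symm) fxz).symm.trans ha)
    · subst hy
      exact hx2 hca ((hf a x y z ea ex ey ez h1 h2 h3 ha fxz).symm.trans ha)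
    · subst ha
      exact hx1 ((hf p x y z hp2 ex ey ez (by omega) h2 h3 hy.symm fxz).symm)
    · subst ha
      exact hx2 hcy ((hf a x y z ea ex ey ez h1 h2 h3 hy.symm fxz).symm.trans rfl)
    · omega
  · -- x, z merged; a, y not
    exfalso
    have hMy : ¬ M y := by
      intro h
      rw [hgN a hMa, hgM y h] at hay
      exact hC a hay.symm
    have hMz : M z := by
      by_contra h
      rw [hgM x hMx, hgN z h] at hxz
      exact hC z hxz
    have fay : f a = f y := by rw [← hgN a hMa, ← hgN y hMy]; exact hay
    rw [hM] at hMa hMy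
    push_neg at hMa hMy
    obtain ⟨ha1, ha2, ha3⟩ := hMa
    obtain ⟨hy1, hy2, hy3⟩ := hMy
    have hap : a ≠ p := fun h => ha1 (by rw [h])
    have hyp : y ≠ p := fun h => hy1 (by rw [h])
    rcases (hM x).mp hMx with hx | ⟨hcx, hx⟩ | hx <;>
      rcases (hM z).mp hMz with hz | ⟨hcz, hz⟩ | hz
    · exact ha1 ((hf a x y z ea ex ey ez h1 h2 h3 fay (hx.trans hz.symm)).trans hx)
    · by_cases hyq : y < p
      · exact ha1 ((hf a x y p ea ex ey hp2 h1 h2 (by omega) fay hx).trans hx)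
      · have hyq' : q < y := by omega
        by_cases haq : a < p
        · exact ha2 hcz (hf a q y z ea hq2' ey ez (by omega) (by omega) h3 fay hz.symm)
        · have haq' : q < a := by omega
          exact ha1 ((hf p a x y hp2 ea ex ey (by omega) h1 h2 hx.symm fay).symm)
    · -- z = q
      subst hz
      by_cases hyq : y < p
      · exact ha1 ((hf a x y p ea ex ey hp2 h1 h2 (by omega) fay hx).trans hx)
      · omega
    · by_cases hyq : y < p
      · exact ha2 hcx ((hf a x y q ea ex ey hq2' h1 h2 (by omega) fay hx).trans hx)
      · have hyq' : q < y := by omega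
        by_cases haq : a < p
        · exact ha1 (hf a p y z ea hp2 ey ez (by omega) (by omega) h3 fay hz.symm)
        · have haq' : q < a := by omega
          exact ha2 hcx ((hf q a x y hq2' ea ex ey (by omega) h1 h2 hx.symm fay).symm)
    · exact ha2 hcx ((hf a x y z ea ex ey ez h1 h2 h3 fay (hx.trans hz.symm)).trans hx)
    · subst hz
      exact ha2 hcx ((hf a x y z ea ex ey ez h1 h2 h3 fay hx).trans hx)
    · subst hx
      have haq : a < p := by omega
      exact ha1 (hf a p y z ea hp2 ey ez (by omega) (by omega) h3 fay hz.symm)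
    · subst hx
      exact ha2 hcz ((hf a x y z ea ex ey ez h1 h2 h3 fay hz.symm).trans rfl)
    · omega
  · -- none merged on the a side? a not merged, x not merged
    have hMy : ¬ M y := by
      intro h
      rw [hgN a hMa, hgM y h] at hay
      exact hC a hay.symm
    have hMz : ¬ M z := by
      intro h
      rw [hgN x hMx, hgM z h] at hxz
      exact hC x hxz.symm
    have fay : f a = f y := by rw [← hgN a hMa, ← hgN y hMy]; exact hay
    have fxz : f x = f z := by rw [← hgN x hMx, ← hgN z hMz]; exact hxz
    rw [hgN a hMa, hgN x hMx]
    exact hf a x y z ea ex ey ez h1 h2 h3 fay fxz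

/-- Noncrossing of the cluster fibers, for arbitrary lists of dominoes. -/
lemma NC_all : ∀ T : List Domino, NCb (bcl T)
  | [] => by intro a x y z _ _ _ _ _ _ _ _ _; rfl
  | [d] => by intro a x y z _ _ _ _ _ _ _ _ _; rfl
  | d :: e :: rest => by
      have IH := NC_all (e :: rest)
      have hR : (e :: rest) ≠ [] := by simp
      set R := e :: rest with hRdef
      have hbig : ∀ m, R.length + 1 ∉ bcl R m := fun m h => by
        have := cluster_bound R h; omega
      cases d with
      | H i j =>
          rcases Nat.even_or_odd j with hj | hj
          · exact same_NC (fun u v => by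
              rw [show bcl (.H i j :: R) = bcl R from by
                rw [bcl, b_H_even hR (Nat.even_iff.mp hj)]]) IH
          · have hj' := Nat.odd_iff.mp hj
            refine merge_NC (f := bcl R) (p := j - 1) (q := j + 1)
              (cond := j + 1 ∈ partsFinset R)
              (C := insert (R.length + 1) (if j+1 ∈ partsFinset R then
                bcl R (j-1) ∪ bcl R (j+1) else bcl R (j-1)))
              (M := fun m => bcl R m = bcl R (j-1) ∨
                (j + 1 ∈ partsFinset R ∧ bcl R m = bcl R (j+1)) ∨ m = j + 1)
              (fun u => Iff.rfl) (by omega) (by omega)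
              (fun u => newC_ne (Finset.mem_insert_self _ _) u) ?_ ?_ IH
            · intro u hu
              rw [b_H_odd hR hj', if_pos hu]
            · intro u hu
              rw [b_H_odd hR hj', if_neg hu]
      | V i j =>
          rcases Nat.even_or_odd j with hj | hj
          · have hj' := Nat.even_iff.mp hj
            by_cases hp : j ∈ partsFinset R
            · exact same_NC (fib_of_mergeself hbig (b_V_even_part hR hj' hp)) IH
            · exact split_NC (fun u => newC_ne (Finset.mem_singleton_self _) u)
                (b_V_even_nopart hR hj' hp) IH
          · exact same_NC (fib_of_mergeself hbig (b_V_odd hR (Nat.odd_iff.mp hj))) IH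
/-! ### Young diagram geometry -/

lemma young_row_all {S : Finset (ℕ × ℕ)} (hY : IsYoungDiagramSet S) {i l l' : ℕ}
    (h : (i, l) ∈ S) (h1 : 1 ≤ l') (h2 : l' ≤ l) : (i, l') ∈ S := by
  obtain ⟨d, rfl⟩ := Nat.exists_eq_add_of_le h2
  clear h2
  induction d with
  | zero => exact h
  | succ d ih => exact ih (hY.2.1 i (l' + d) h (by omega))

lemma mem_H_boxes {i j a b : ℕ} : (a, b) ∈ (Domino.H i j).boxes ↔ a = i ∧ (b = j ∨ b = j + 1) := by
  simp [Domino.boxes, Prod.ext_iff]; tauto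

lemma mem_V_boxes {i j a b : ℕ} : (a, b) ∈ (Domino.V i j).boxes ↔ b = j ∧ (a = i ∨ a = i + 1) := by
  simp [Domino.boxes, Prod.ext_iff]; tauto

lemma label_rest {d : Domino} {R : List Domino}
    (hdisj : (d :: R).Pairwise (fun d d' => Disjoint d.boxes d'.boxes)) {p : ℕ × ℕ}
    (hp : p ∈ boxesOf R) : labelOf (d :: R) p = labelOf R p := by
  apply labelOf_cons_of_not_mem
  intro h
  exact head_disjoint_rest hdisj h hp

/-- Characterization of the rows of `T = H i j :: R`. -/
lemma rows_H {i j : ℕ} {R : List Domino} (hT : IsStandardDT (.H i j :: R)) :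
    (∀ l, (i, l) ∈ boxesOf (.H i j :: R) ↔ 1 ≤ l ∧ l ≤ j + 1) ∧
    (∀ l, (i, l) ∈ boxesOf R ↔ 1 ≤ l ∧ l ≤ j - 1) ∧
    (∀ i' l, i' ≠ i → ((i', l) ∈ boxesOf (.H i j :: R) ↔ (i', l) ∈ boxesOf R)) ∧
    1 ≤ i ∧ 1 ≤ j := by
  obtain ⟨hval, hdisj, hY, hcol, hrow⟩ := hT
  have hv := hval _ List.mem_cons_self
  obtain ⟨hi1, hj1⟩ : 1 ≤ i ∧ 1 ≤ j := hv
  have hdT : ∀ p ∈ (Domino.H i j).boxes, p ∈ boxesOf (.H i j :: R) := fun p hp => by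
    rw [boxesOf_cons]; exact Finset.mem_union_left _ hp
  have hj2 : (i, j + 1) ∈ boxesOf (.H i j :: R) := hdT _ (by simp [Domino.boxes])
  have hub : ∀ l, (i, l) ∈ boxesOf (.H i j :: R) → l ≤ j + 1 := by
    intro l hl
    by_contra hcon
    have h2 : (i, j + 2) ∈ boxesOf (.H i j :: R) := young_row_all hY hl (by omega) (by omega)
    have h2R : (i, j + 2) ∈ boxesOf R := by
      rcases Finset.mem_union.mp (by rwa [boxesOf_cons] at h2) with h | h
      · rw [mem_H_boxes] at h; omega
      · exact h
    have := hrow i (j + 1) hj2 h2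
    rw [labelOf_cons_of_mem (by simp [Domino.boxes]), label_rest hdisj h2R] at this
    have := labelOf_le_length R (i, j + 2)
    omega
  have hrowT : ∀ l, (i, l) ∈ boxesOf (.H i j :: R) ↔ 1 ≤ l ∧ l ≤ j + 1 := by
    intro l
    constructor
    · intro hl; exact ⟨(hY.1 _ hl).2, hub l hl⟩
    · intro ⟨h1, h2⟩; exact young_row_all hY hj2 h1 h2
  refine ⟨hrowT, ?_, ?_, hi1, hj1⟩
  · intro l
    constructor
    · intro hl
      have hlT : (i, l) ∈ boxesOf (.H i j :: R) := boxesOf_subset_cons _ _ hl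
      have h1 := (hY.1 _ hlT).2
      have h2 := hub l hlT
      have hnd : (i, l) ∉ (Domino.H i j).boxes := fun h => head_disjoint_rest hdisj h hl
      rw [mem_H_boxes] at hnd
      push_neg at hnd
      have h3 := hnd rfl
      exact ⟨h1, by omega⟩
    · intro ⟨h1, h2⟩
      have hlT : (i, l) ∈ boxesOf (.H i j :: R) := (hrowT l).mpr ⟨h1, by omega⟩
      rcases Finset.mem_union.mp (by rwa [boxesOf_cons] at hlT) with h | h
      · rw [mem_H_boxes] at h; omega
      · exact h
  · intro i' l hne
    rw [boxesOf_cons, Finset.mem_union]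
    constructor
    · rintro (h | h)
      · rw [mem_H_boxes] at h; omega
      · exact h
    · exact Or.inr

/-- Characterization of the rows of `T = V i j :: R`. -/
lemma rows_V {i j : ℕ} {R : List Domino} (hT : IsStandardDT (.V i j :: R)) :
    (∀ l, (i, l) ∈ boxesOf (.V i j :: R) ↔ 1 ≤ l ∧ l ≤ j) ∧
    (∀ l, (i + 1, l) ∈ boxesOf (.V i j :: R) ↔ 1 ≤ l ∧ l ≤ j) ∧
    (∀ l, (i, l) ∈ boxesOf R ↔ 1 ≤ l ∧ l ≤ j - 1) ∧
    (∀ l, (i + 1, l) ∈ boxesOf R ↔ 1 ≤ l ∧ l ≤ j - 1) ∧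
    (∀ i' l, i' ≠ i → i' ≠ i + 1 → ((i', l) ∈ boxesOf (.V i j :: R) ↔ (i', l) ∈ boxesOf R)) ∧
    1 ≤ i ∧ 1 ≤ j := by
  obtain ⟨hval, hdisj, hY, hcol, hrow⟩ := hT
  have hv := hval _ List.mem_cons_self
  obtain ⟨hi1, hj1⟩ : 1 ≤ i ∧ 1 ≤ j := hv
  have hdT : ∀ p ∈ (Domino.V i j).boxes, p ∈ boxesOf (.V i j :: R) := fun p hp => by
    rw [boxesOf_cons]; exact Finset.mem_union_left _ hp
  have hb1 : (i, j) ∈ boxesOf (.V i j :: R) := hdT _ (by simp [Domino.boxes])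
  have hb2 : (i + 1, j) ∈ boxesOf (.V i j :: R) := hdT _ (by simp [Domino.boxes])
  have hub : ∀ a, a = i ∨ a = i + 1 → ∀ l, (a, l) ∈ boxesOf (.V i j :: R) → l ≤ j := by
    intro a ha l hl
    by_contra hcon
    have h2 : (a, j + 1) ∈ boxesOf (.V i j :: R) := young_row_all hY hl (by omega) (by omega)
    have h2R : (a, j + 1) ∈ boxesOf R := by
      rcases Finset.mem_union.mp (by rwa [boxesOf_cons] at h2) with h | h
      · rw [mem_V_boxes] at h; omega
      · exact h
    have hstep := hrow a j (by rcases ha with rfl | rfl <;> assumption) h2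
    rw [labelOf_cons_of_mem (by rcases ha with rfl | rfl <;> simp [Domino.boxes]),
      label_rest hdisj h2R] at hstep
    have := labelOf_le_length R (a, j + 1)
    omega
  have hrowTi : ∀ l, (i, l) ∈ boxesOf (.V i j :: R) ↔ 1 ≤ l ∧ l ≤ j := by
    intro l
    constructor
    · intro hl; exact ⟨(hY.1 _ hl).2, hub i (Or.inl rfl) l hl⟩
    · intro ⟨h1, h2⟩; exact young_row_all hY hb1 h1 h2
  have hrowTi1 : ∀ l, (i + 1, l) ∈ boxesOf (.V i j :: R) ↔ 1 ≤ l ∧ l ≤ j := by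
    intro l
    constructor
    · intro hl; exact ⟨(hY.1 _ hl).2, hub (i+1) (Or.inr rfl) l hl⟩
    · intro ⟨h1, h2⟩; exact young_row_all hY hb2 h1 h2
  have hrest : ∀ a, a = i ∨ a = i + 1 → ∀ l, ((a, l) ∈ boxesOf R ↔ 1 ≤ l ∧ l ≤ j - 1) := by
    intro a ha l
    constructor
    · intro hl
      have hlT : (a, l) ∈ boxesOf (.V i j :: R) := boxesOf_subset_cons _ _ hl
      have h1 := (hY.1 _ hlT).2
      have h2 := hub a ha l hlT
      have hnd : (a, l) ∉ (Domino.V i j).boxes := fun h => head_disjoint_rest hdisj h hl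
      rw [mem_V_boxes] at hnd
      refine ⟨h1, ?_⟩
      by_contra hcon
      have hlj : l = j := by omega
      exact hnd ⟨hlj, ha⟩
    · intro ⟨h1, h2⟩
      have hlT : (a, l) ∈ boxesOf (.V i j :: R) := by
        rcases ha with rfl | rfl
        · exact (hrowTi l).mpr ⟨h1, by omega⟩
        · exact (hrowTi1 l).mpr ⟨h1, by omega⟩
      rcases Finset.mem_union.mp (by rwa [boxesOf_cons] at hlT) with h | h
      · rw [mem_V_boxes] at h; omega
      · exact h
  refine ⟨hrowTi, hrowTi1, hrest i (Or.inl rfl), hrest (i+1) (Or.inr rfl), ?_, hi1, hj1⟩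
  intro i' l h1 h2
  rw [boxesOf_cons, Finset.mem_union]
  constructor
  · rintro (h | h)
    · rw [mem_V_boxes] at h; omega
    · exact h
  · exact Or.inr

/-! ### Tail of a standard/admissible tableau -/

lemma standard_tail {d : Domino} {R : List Domino} (hT : IsStandardDT (d :: R)) :
    IsStandardDT R := by
  obtain ⟨hval, hdisj, hY, hcol, hrow⟩ := hT
  have hmemT : ∀ p, p ∈ boxesOf R → p ∈ boxesOf (d :: R) := fun p hp => boxesOf_subset_cons d R hp
  have hnotd : ∀ p, p ∈ boxesOf R → p ∉ d.boxes := fun p hp h => head_disjoint_rest hdisj h hp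
  have hsplit : ∀ p, p ∈ boxesOf (d :: R) → p ∉ d.boxes → p ∈ boxesOf R := by
    intro p hp hnd
    rcases Finset.mem_union.mp (by rwa [boxesOf_cons] at hp) with h | h
    · exact absurd h hnd
    · exact h
  refine ⟨fun d' hd' => hval d' (List.mem_cons_of_mem _ hd'), (List.pairwise_cons.mp hdisj).2,
    ⟨fun p hp => hY.1 p (hmemT p hp), ?_, ?_⟩, ?_, ?_⟩
  · intro i l hl h1
    have hT1 : (i, l) ∈ boxesOf (d :: R) := hY.2.1 i l (hmemT _ hl) h1
    apply hsplit _ hT1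
    intro hd
    have := hrow i l hT1 (hmemT _ hl)
    rw [labelOf_cons_of_mem hd, label_rest hdisj hl] at this
    have := labelOf_le_length R (i, l + 1)
    omega
  · intro i l hl h1
    have hT1 : (i, l) ∈ boxesOf (d :: R) := hY.2.2 i l (hmemT _ hl) h1
    apply hsplit _ hT1
    intro hd
    have := hcol i l hT1 (hmemT _ hl)
    rw [labelOf_cons_of_mem hd, label_rest hdisj hl] at this
    have := labelOf_le_length R (i + 1, l)
    omega
  · intro i l h1 h2
    have := hcol i l (hmemT _ h1) (hmemT _ h2)
    rwa [label_rest hdisj h1, label_rest hdisj h2] at this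
  · intro i l h1 h2
    have := hrow i l (hmemT _ h1) (hmemT _ h2)
    rwa [label_rest hdisj h1, label_rest hdisj h2] at this

lemma admissible_tail {d : Domino} {R : List Domino} (hT : IsAdmissibleC (d :: R)) :
    IsAdmissibleC R := by
  refine ⟨standard_tail hT.1, fun k => ?_⟩
  have := hT.2 (k + 1)
  rwa [List.drop_succ_cons] at this
/-! ### Row lengths and shapes -/

lemma rowLen_eq {A : List Domino} {i m : ℕ} (h : ∀ l, (i, l) ∈ boxesOf A ↔ 1 ≤ l ∧ l ≤ m) :
    rowLen A i = m := by
  rw [rowLen]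
  have hset : (boxesOf A).filter (fun p => p.1 = i) =
      (Finset.Icc 1 m).image (fun l => (i, l)) := by
    ext ⟨r, c⟩
    simp only [Finset.mem_filter, Finset.mem_image, Finset.mem_Icc]
    constructor
    · rintro ⟨hmem, rfl⟩
      exact ⟨c, (h c).mp hmem, rfl⟩
    · rintro ⟨l, hl, heq⟩
      obtain ⟨rfl, rfl⟩ : i = r ∧ l = c := by
        constructor <;> [exact congrArg Prod.fst heq; exact congrArg Prod.snd heq]
      exact ⟨(h _).mpr hl, rfl⟩
  rw [hset, Finset.card_image_of_injective _ (fun a b hab => by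
    simpa using congrArg Prod.snd hab), Nat.card_Icc]
  omega

lemma rowLen_congr {A B : List Domino} {i : ℕ}
    (h : ∀ l, (i, l) ∈ boxesOf A ↔ (i, l) ∈ boxesOf B) : rowLen A i = rowLen B i := by
  rw [rowLen, rowLen]
  congr 1
  ext ⟨r, c⟩
  simp only [Finset.mem_filter]
  constructor
  · rintro ⟨hm, rfl⟩; exact ⟨(h c).mp hm, rfl⟩
  · rintro ⟨hm, rfl⟩; exact ⟨(h c).mpr hm, rfl⟩

lemma shapeOf_def (A : List Domino) :
    shapeOf A = ((boxesOf A).image Prod.fst).val.map (rowLen A) := rfl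

lemma mem_rows {A : List Domino} {i : ℕ} :
    i ∈ (boxesOf A).image Prod.fst ↔ ∃ l, (i, l) ∈ boxesOf A :=
  ⟨fun h => by
      obtain ⟨⟨r, c⟩, hm, he⟩ := Finset.mem_image.mp h
      have : r = i := he
      subst this
      exact ⟨c, hm⟩,
   fun ⟨l, hl⟩ => Finset.mem_image.mpr ⟨(i, l), hl, rfl⟩⟩

lemma parts_iff_shape {A : List Domino} {m : ℕ} :
    m ∈ partsFinset A ↔ m ∈ shapeOf A := by
  rw [partsFinset, shapeOf_def]
  constructor
  · intro h
    obtain ⟨i, hi, he⟩ := Finset.mem_image.mp h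
    exact Multiset.mem_map.mpr ⟨i, Finset.mem_def.mp hi, he⟩
  · intro h
    obtain ⟨i, hi, he⟩ := Multiset.mem_map.mp h
    exact Finset.mem_image.mpr ⟨i, Finset.mem_def.mpr hi, he⟩

/-- shape of `H i j :: R` for `j ≥ 2`. -/
lemma shape_H {i j : ℕ} {R : List Domino} (hT : IsStandardDT (.H i j :: R)) (hj : 2 ≤ j) :
    ∃ M, shapeOf (.H i j :: R) = (j + 1) ::ₘ M ∧ shapeOf R = (j - 1) ::ₘ M := by
  obtain ⟨hrowT, hrowR, hother, hi1, hj1⟩ := rows_H hT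
  have hiR : i ∈ (boxesOf R).image Prod.fst :=
    mem_rows.mpr ⟨1, (hrowR 1).mpr ⟨le_rfl, by omega⟩⟩
  have hrows : (boxesOf (.H i j :: R)).image Prod.fst = (boxesOf R).image Prod.fst := by
    ext i'
    rw [mem_rows, mem_rows]
    constructor
    · rintro ⟨l, hl⟩
      by_cases hii : i' = i
      · subst hii; exact ⟨1, (hrowR 1).mpr ⟨le_rfl, by omega⟩⟩
      · exact ⟨l, (hother i' l hii).mp hl⟩
    · rintro ⟨l, hl⟩; exact ⟨l, boxesOf_subset_cons _ _ hl⟩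
  set s := (boxesOf R).image Prod.fst with hs
  have hval : s.val = i ::ₘ (s.erase i).val := by
    rw [Finset.erase_val]
    exact (Multiset.cons_erase (Finset.mem_def.mp hiR)).symm
  have hcongr : ∀ i' ∈ (s.erase i).val, rowLen (.H i j :: R) i' = rowLen R i' := by
    intro i' hi'
    have hne : i' ≠ i := (Finset.mem_erase.mp hi').1
    exact rowLen_congr (fun l => hother i' l hne)
  refine ⟨(s.erase i).val.map (rowLen R), ?_, ?_⟩
  · rw [shapeOf_def, hrows, hval, Multiset.map_cons, rowLen_eq hrowT,
      Multiset.map_congr rfl hcongr]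
  · rw [shapeOf_def, ← hs, hval, Multiset.map_cons, rowLen_eq hrowR]

/-- shape of `H i 1 :: R`. -/
lemma shape_H1 {i : ℕ} {R : List Domino} (hT : IsStandardDT (.H i 1 :: R)) :
    shapeOf (.H i 1 :: R) = 2 ::ₘ shapeOf R := by
  obtain ⟨hrowT, hrowR, hother, hi1, hj1⟩ := rows_H hT
  have hiR : i ∉ (boxesOf R).image Prod.fst := by
    rw [mem_rows]
    rintro ⟨l, hl⟩
    have := (hrowR l).mp hl
    omega
  have hrows : (boxesOf (.H i 1 :: R)).image Prod.fst =
      insert i ((boxesOf R).image Prod.fst) := by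
    ext i'
    rw [mem_rows, Finset.mem_insert, mem_rows]
    constructor
    · rintro ⟨l, hl⟩
      by_cases hii : i' = i
      · exact Or.inl hii
      · exact Or.inr ⟨l, (hother i' l hii).mp hl⟩
    · rintro (rfl | ⟨l, hl⟩)
      · exact ⟨1, (hrowT 1).mpr (by omega)⟩
      · exact ⟨l, boxesOf_subset_cons _ _ hl⟩
  have hcongr : ∀ i' ∈ ((boxesOf R).image Prod.fst).val,
      rowLen (.H i 1 :: R) i' = rowLen R i' := by
    intro i' hi'
    have hne : i' ≠ i := fun h => hiR (h ▸ hi')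
    exact rowLen_congr (fun l => hother i' l hne)
  rw [shapeOf_def, hrows, Finset.insert_val_of_notMem hiR, Multiset.map_cons,
    rowLen_eq hrowT, Multiset.map_congr rfl hcongr, shapeOf_def]

/-- shape of `V i j :: R` for `j ≥ 2`. -/
lemma shape_V {i j : ℕ} {R : List Domino} (hT : IsStandardDT (.V i j :: R)) (hj : 2 ≤ j) :
    ∃ M, shapeOf (.V i j :: R) = j ::ₘ j ::ₘ M ∧ shapeOf R = (j - 1) ::ₘ (j - 1) ::ₘ M := by
  obtain ⟨hrowTi, hrowTi1, hrowRi, hrowRi1, hother, hi1, hj1⟩ := rows_V hT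
  have hiR : i ∈ (boxesOf R).image Prod.fst :=
    mem_rows.mpr ⟨1, (hrowRi 1).mpr ⟨le_rfl, by omega⟩⟩
  have hi1R : i + 1 ∈ (boxesOf R).image Prod.fst :=
    mem_rows.mpr ⟨1, (hrowRi1 1).mpr ⟨le_rfl, by omega⟩⟩
  have hrows : (boxesOf (.V i j :: R)).image Prod.fst = (boxesOf R).image Prod.fst := by
    ext i'
    rw [mem_rows, mem_rows]
    constructor
    · rintro ⟨l, hl⟩
      by_cases hii : i' = i
      · subst hii; exact ⟨1, (hrowRi 1).mpr ⟨le_rfl, by omega⟩⟩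
      · by_cases hii1 : i' = i + 1
        · subst hii1; exact ⟨1, (hrowRi1 1).mpr ⟨le_rfl, by omega⟩⟩
        · exact ⟨l, (hother i' l hii hii1).mp hl⟩
    · rintro ⟨l, hl⟩; exact ⟨l, boxesOf_subset_cons _ _ hl⟩
  set s := (boxesOf R).image Prod.fst with hs
  have hmem2 : i + 1 ∈ s.erase i := Finset.mem_erase.mpr ⟨by omega, hi1R⟩
  have hval : s.val = i ::ₘ (i+1) ::ₘ ((s.erase i).erase (i+1)).val := by
    have e1 : (i+1) ::ₘ ((s.erase i).erase (i+1)).val = (s.erase i).val := by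
      rw [Finset.erase_val (s.erase i)]
      exact Multiset.cons_erase (Finset.mem_def.mp hmem2)
    have e2 : i ::ₘ (s.erase i).val = s.val := by
      rw [Finset.erase_val]
      exact Multiset.cons_erase (Finset.mem_def.mp hiR)
    rw [e1, e2]
  have hcongr : ∀ i' ∈ ((s.erase i).erase (i+1)).val, rowLen (.V i j :: R) i' = rowLen R i' := by
    intro i' hi'
    have h1 := Finset.mem_erase.mp hi'
    have h2 := Finset.mem_erase.mp h1.2
    exact rowLen_congr (fun l => hother i' l h2.1 h1.1)
  refine ⟨((s.erase i).erase (i+1)).val.map (rowLen R), ?_, ?_⟩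
  · rw [shapeOf_def, hrows, hval, Multiset.map_cons, Multiset.map_cons,
      rowLen_eq hrowTi, rowLen_eq hrowTi1, Multiset.map_congr rfl hcongr]
  · rw [shapeOf_def, ← hs, hval, Multiset.map_cons, Multiset.map_cons,
      rowLen_eq hrowRi, rowLen_eq hrowRi1]

/-- shape of `V i 1 :: R`. -/
lemma shape_V1 {i : ℕ} {R : List Domino} (hT : IsStandardDT (.V i 1 :: R)) :
    shapeOf (.V i 1 :: R) = 1 ::ₘ 1 ::ₘ shapeOf R := by
  obtain ⟨hrowTi, hrowTi1, hrowRi, hrowRi1, hother, hi1, hj1⟩ := rows_V hT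
  have hiR : i ∉ (boxesOf R).image Prod.fst := by
    rw [mem_rows]; rintro ⟨l, hl⟩; have := (hrowRi l).mp hl; omega
  have hi1R : i + 1 ∉ (boxesOf R).image Prod.fst := by
    rw [mem_rows]; rintro ⟨l, hl⟩; have := (hrowRi1 l).mp hl; omega
  have hrows : (boxesOf (.V i 1 :: R)).image Prod.fst =
      insert i (insert (i+1) ((boxesOf R).image Prod.fst)) := by
    ext i'
    rw [mem_rows, Finset.mem_insert, Finset.mem_insert, mem_rows]
    constructor
    · rintro ⟨l, hl⟩
      by_cases hii : i' = i
      · exact Or.inl hii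
      · by_cases hii1 : i' = i + 1
        · exact Or.inr (Or.inl hii1)
        · exact Or.inr (Or.inr ⟨l, (hother i' l hii hii1).mp hl⟩)
    · rintro (rfl | rfl | ⟨l, hl⟩)
      · exact ⟨1, (hrowTi 1).mpr (by omega)⟩
      · exact ⟨1, (hrowTi1 1).mpr (by omega)⟩
      · exact ⟨l, boxesOf_subset_cons _ _ hl⟩
  have hni : i ∉ insert (i+1) ((boxesOf R).image Prod.fst) := by
    rw [Finset.mem_insert]; push_neg; exact ⟨by omega, hiR⟩
  have hcongr : ∀ i' ∈ ((boxesOf R).image Prod.fst).val,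
      rowLen (.V i 1 :: R) i' = rowLen R i' := by
    intro i' hi'
    have hne : i' ≠ i := fun h => hiR (h ▸ hi')
    have hne1 : i' ≠ i + 1 := fun h => hi1R (h ▸ hi')
    exact rowLen_congr (fun l => hother i' l hne hne1)
  rw [shapeOf_def, hrows, Finset.insert_val_of_notMem hni,
    Finset.insert_val_of_notMem hi1R, Multiset.map_cons, Multiset.map_cons,
    rowLen_eq hrowTi, rowLen_eq hrowTi1, Multiset.map_congr rfl hcongr, shapeOf_def]
/-! ### The parity invariant -/

lemma card_filter_cons (a : ℕ) (s : Multiset ℕ) (p : ℕ → Prop) [DecidablePred p] :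
    Multiset.card (Multiset.filter p (a ::ₘ s)) =
      (if p a then 1 else 0) + Multiset.card (Multiset.filter p s) := by
  rw [Multiset.filter_cons, Multiset.card_add]
  split_ifs <;> simp

lemma card_filter_or (s : Multiset ℕ) (p q : ℕ → Prop) [DecidablePred p] [DecidablePred q]
    (h : ∀ m, ¬(p m ∧ q m)) :
    Multiset.card (Multiset.filter (fun m => p m ∨ q m) s) =
      Multiset.card (Multiset.filter p s) + Multiset.card (Multiset.filter q s) := by
  induction s using Multiset.induction_on with
  | empty => simp
  | cons a s ih =>
      rw [card_filter_cons, card_filter_cons, card_filter_cons]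
      by_cases hp : p a <;> by_cases hq : q a
      · exact absurd ⟨hp, hq⟩ (h a)
      · rw [if_pos (Or.inl hp), if_pos hp, if_neg hq]; omega
      · rw [if_pos (Or.inr hq), if_neg hp, if_pos hq]; omega
      · rw [if_neg (by tauto), if_neg hp, if_neg hq]; omega

def Einv (T : List Domino) : Prop :=
  ∀ v : ℕ, v % 2 = 0 → bcl T v ≠ bcl T 0 →
    Even (Multiset.card ((shapeOf T).filter (fun m => m % 2 = 0 ∧ bcl T m = bcl T v)))

lemma Einv_all : ∀ (T : List Domino), IsAdmissibleC T → Einv T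
  | [] => fun _ v _ _ => by simp [shapeOf, boxesOf]
  | [d] => fun _ v _ hne => absurd rfl hne
  | d :: e :: rest => fun hT => by
      have hR : (e :: rest) ≠ [] := by simp
      have hadm := admissible_tail hT
      have IH := Einv_all (e :: rest) hadm
      have hstd := hT.1
      have hbig : ∀ m, (e :: rest).length + 1 ∉ bcl (e :: rest) m := fun m h => by
        have := cluster_bound (e :: rest) h; omega
      have hval := hstd.1 d List.mem_cons_self
      intro v hv hvne
      cases d with
      | H i j =>
        obtain ⟨hi1, hj1⟩ : 1 ≤ i ∧ 1 ≤ j := hval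
        rcases Nat.even_or_odd j with hj | hj
        · -- (H, even): nothing changes
          have hj' := Nat.even_iff.mp hj
          have hbeq : bcl (.H i j :: e :: rest) = bcl (e :: rest) :=
            congrArg Prod.snd (b_H_even hR hj')
          rw [hbeq] at hvne ⊢
          obtain ⟨M, hsT, hsR⟩ := shape_H hstd (by omega)
          have hE := IH v hv hvne
          rw [hsR, card_filter_cons, if_neg (fun h => by omega)] at hE
          rw [hsT, card_filter_cons, if_neg (fun h => by omega)]
          rw [Nat.even_iff] at hE ⊢
          omega
        · -- (H, odd): type (N), the merge
          have hj' := Nat.odd_iff.mp hj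
          have hg := b_H_odd (i := i) hR hj'
          set N := insert ((e :: rest).length + 1)
            (if j+1 ∈ partsFinset (e :: rest) then
              bcl (e :: rest) (j-1) ∪ bcl (e :: rest) (j+1) else bcl (e :: rest) (j-1))
            with hNdef
          have hnew : ∀ u, N ≠ bcl (e :: rest) u :=
            fun u => newC_ne (Finset.mem_insert_self _ _) u
          by_cases hMv : bcl (e :: rest) v = bcl (e :: rest) (j-1) ∨
              (j+1 ∈ partsFinset (e :: rest) ∧ bcl (e :: rest) v = bcl (e :: rest) (j+1)) ∨
              v = j + 1
          · -- v lands in the merged cluster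
            have hgv : bcl (.H i j :: e :: rest) v = N := by rw [hg v, if_pos hMv]
            have hM0 : ¬(bcl (e :: rest) 0 = bcl (e :: rest) (j-1) ∨
                (j+1 ∈ partsFinset (e :: rest) ∧ bcl (e :: rest) 0 = bcl (e :: rest) (j+1)) ∨
                (0 : ℕ) = j + 1) := by
              intro h
              apply hvne
              rw [hgv, hg 0, if_pos h]
            have hjne1 : j ≠ 1 := by
              rintro rfl
              exact hM0 (Or.inl rfl)
            have hj3 : 3 ≤ j := by omega
            push_neg at hM0
            obtain ⟨h01, h02, _⟩ := hM0
            obtain ⟨M, hsT, hsR⟩ := shape_H hstd (by omega)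
            have hpredT : ∀ m ∈ M,
                ((m % 2 = 0 ∧ bcl (.H i j :: e :: rest) m = bcl (.H i j :: e :: rest) v) ↔
                 (m % 2 = 0 ∧ (bcl (e :: rest) m = bcl (e :: rest) (j-1) ∨
                   (j+1 ∈ partsFinset (e :: rest) ∧ bcl (e :: rest) m = bcl (e :: rest) (j+1))))) := by
              intro m hm
              rw [hgv, hg m]
              constructor
              · rintro ⟨he, heq⟩
                refine ⟨he, ?_⟩
                by_cases hMm : bcl (e :: rest) m = bcl (e :: rest) (j-1) ∨
                    (j+1 ∈ partsFinset (e :: rest) ∧ bcl (e :: rest) m = bcl (e :: rest) (j+1)) ∨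
                    m = j + 1
                · rcases hMm with h | h | rfl
                  · exact Or.inl h
                  · exact Or.inr h
                  · have hcnd : j + 1 ∈ partsFinset (e :: rest) :=
                      parts_iff_shape.mpr (by rw [hsR]; exact Multiset.mem_cons_of_mem hm)
                    exact Or.inr ⟨hcnd, rfl⟩
                · rw [if_neg hMm] at heq
                  exact absurd heq.symm (hnew m)
              · rintro ⟨he, hd⟩
                exact ⟨he, by rw [if_pos (by tauto)]⟩
            have hptop : ((j+1) % 2 = 0 ∧
                bcl (.H i j :: e :: rest) (j+1) = bcl (.H i j :: e :: rest) v) := by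
              refine ⟨by omega, ?_⟩
              rw [hgv, hg (j+1), if_pos (Or.inr (Or.inr rfl))]
            rw [hsT, card_filter_cons, if_pos hptop, Multiset.filter_congr hpredT]
            have hE1 := IH (j-1) (by omega) (fun h => h01 h.symm)
            rw [hsR, card_filter_cons, if_pos ⟨by omega, rfl⟩] at hE1
            by_cases hcond : j + 1 ∈ partsFinset (e :: rest)
            · by_cases hpq : bcl (e :: rest) (j-1) = bcl (e :: rest) (j+1)
              · have hcoll : ∀ m ∈ M,
                    ((m % 2 = 0 ∧ (bcl (e :: rest) m = bcl (e :: rest) (j-1) ∨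
                      (j+1 ∈ partsFinset (e :: rest) ∧ bcl (e :: rest) m = bcl (e :: rest) (j+1)))) ↔
                     (m % 2 = 0 ∧ bcl (e :: rest) m = bcl (e :: rest) (j-1))) := by
                  intro m _
                  constructor
                  · rintro ⟨h1, (h2 | ⟨_, h2⟩)⟩
                    · exact ⟨h1, h2⟩
                    · exact ⟨h1, h2.trans hpq.symm⟩
                  · rintro ⟨h1, h2⟩; exact ⟨h1, Or.inl h2⟩
                rw [Multiset.filter_congr hcoll]
                exact hE1
              · have hsplitc : ∀ m ∈ M,
                    ((m % 2 = 0 ∧ (bcl (e :: rest) m = bcl (e :: rest) (j-1) ∨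
                      (j+1 ∈ partsFinset (e :: rest) ∧ bcl (e :: rest) m = bcl (e :: rest) (j+1)))) ↔
                     ((m % 2 = 0 ∧ bcl (e :: rest) m = bcl (e :: rest) (j-1)) ∨
                      (m % 2 = 0 ∧ bcl (e :: rest) m = bcl (e :: rest) (j+1)))) := by
                  intro m _
                  constructor
                  · rintro ⟨h1, (h2 | ⟨_, h2⟩)⟩
                    · exact Or.inl ⟨h1, h2⟩
                    · exact Or.inr ⟨h1, h2⟩
                  · rintro (⟨h1, h2⟩ | ⟨h1, h2⟩)
                    · exact ⟨h1, Or.inl h2⟩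
                    · exact ⟨h1, Or.inr ⟨hcond, h2⟩⟩
                rw [Multiset.filter_congr hsplitc,
                  card_filter_or M _ _ (fun m => by
                    rintro ⟨⟨_, h1⟩, ⟨_, h2⟩⟩
                    exact hpq (h1.symm.trans h2))]
                have hE2 := IH (j+1) (by omega) (fun h => (h02 hcond) h.symm)
                rw [hsR, card_filter_cons, if_neg (fun h => hpq h.2)] at hE2
                rw [Nat.even_iff] at hE1 hE2 ⊢
                omega
            · have hcoll : ∀ m ∈ M,
                  ((m % 2 = 0 ∧ (bcl (e :: rest) m = bcl (e :: rest) (j-1) ∨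
                    (j+1 ∈ partsFinset (e :: rest) ∧ bcl (e :: rest) m = bcl (e :: rest) (j+1)))) ↔
                   (m % 2 = 0 ∧ bcl (e :: rest) m = bcl (e :: rest) (j-1))) := by
                intro m _
                constructor
                · rintro ⟨h1, (h2 | ⟨hc, _⟩)⟩
                  · exact ⟨h1, h2⟩
                  · exact absurd hc hcond
                · rintro ⟨h1, h2⟩; exact ⟨h1, Or.inl h2⟩
              rw [Multiset.filter_congr hcoll]
              exact hE1
          · -- v untouched
            have hgv : bcl (.H i j :: e :: rest) v = bcl (e :: rest) v := by
              rw [hg v, if_neg hMv]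
            push_neg at hMv
            obtain ⟨hv1, hv2, hv3⟩ := hMv
            have hM0 : ¬(bcl (e :: rest) 0 = bcl (e :: rest) (j-1) ∨
                (j+1 ∈ partsFinset (e :: rest) ∧ bcl (e :: rest) 0 = bcl (e :: rest) (j+1)) ∨
                (0 : ℕ) = j + 1) ∨ bcl (e :: rest) v ≠ bcl (e :: rest) 0 := by
              by_cases h : bcl (e :: rest) v = bcl (e :: rest) 0
              · left
                rintro (h0 | ⟨hc0, h0⟩ | h0)
                · exact hv1 (h.trans h0)
                · exact hv2 hc0 (h.trans h0)
                · omega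
              · exact Or.inr h
            have hvf : bcl (e :: rest) v ≠ bcl (e :: rest) 0 := by
              rcases hM0 with h | h
              · intro hcon
                apply hvne
                rw [hgv, hg 0, if_neg h]
                exact hcon
              · exact h
            have hE := IH v hv hvf
            have hpredT : ∀ m ∈ shapeOf (e :: rest),
                ((m % 2 = 0 ∧ bcl (.H i j :: e :: rest) m = bcl (.H i j :: e :: rest) v) ↔
                 (m % 2 = 0 ∧ bcl (e :: rest) m = bcl (e :: rest) v)) := by
              intro m hm
              rw [hgv, hg m]
              constructor
              · rintro ⟨he, heq⟩
                split_ifs at heq with hMm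
                · exact absurd heq (hnew v)
                · exact ⟨he, heq⟩
              · rintro ⟨he, heq⟩
                refine ⟨he, ?_⟩
                rw [if_neg ?_]
                · exact heq
                · rintro (h | ⟨hc, h⟩ | rfl)
                  · exact hv1 (heq.symm.trans h)
                  · exact hv2 hc (heq.symm.trans h)
                  · exact hv2 (parts_iff_shape.mpr hm) heq.symm
            have hptop : ∀ c : ℕ, c = j + 1 → ¬(c % 2 = 0 ∧
                bcl (.H i j :: e :: rest) c = bcl (.H i j :: e :: rest) v) := by
              rintro c rfl ⟨_, heq⟩
              rw [hgv, hg (j+1), if_pos (Or.inr (Or.inr rfl))] at heq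
              exact hnew v heq
            rcases eq_or_ne j 1 with rfl | hjne
            · have hsT := shape_H1 hstd
              rw [hsT, card_filter_cons, if_neg (hptop 2 rfl),
                Multiset.filter_congr hpredT, zero_add]
              exact hE
            · have hj3 : 3 ≤ j := by omega
              obtain ⟨M, hsT, hsR⟩ := shape_H hstd (by omega)
              have hMsub : ∀ m ∈ M, m ∈ shapeOf (e :: rest) := by
                intro m hm; rw [hsR]; exact Multiset.mem_cons_of_mem hm
              rw [hsT, card_filter_cons, if_neg (hptop (j+1) rfl),
                Multiset.filter_congr (fun m hm => hpredT m (hMsub m hm)), zero_add]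
              rw [hsR, card_filter_cons, if_neg (fun h => hv1 h.2.symm), zero_add] at hE
              exact hE
      | V i j =>
        obtain ⟨hi1, hj1⟩ : 1 ≤ i ∧ 1 ≤ j := hval
        rcases Nat.even_or_odd j with hj | hj
        · -- (V, even): type (I+)
          have hj' := Nat.even_iff.mp hj
          have hj2 : 2 ≤ j := by omega
          obtain ⟨M, hsT, hsR⟩ := shape_V hstd hj2
          by_cases hp : j ∈ partsFinset (e :: rest)
          · have hfib := fib_of_mergeself hbig (b_V_even_part (i := i) hR hj' hp)
            have hvne' : bcl (e :: rest) v ≠ bcl (e :: rest) 0 :=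
              fun h => hvne ((hfib v 0).mpr h)
            have hE := IH v hv hvne'
            rw [hsR, card_filter_cons, if_neg (fun h => by omega),
              card_filter_cons, if_neg (fun h => by omega), zero_add, zero_add] at hE
            rw [hsT, card_filter_cons, card_filter_cons,
              Multiset.filter_congr (fun m (_ : m ∈ M) => by
                rw [hfib m v] :
                ∀ m ∈ M, ((m % 2 = 0 ∧ bcl (.V i j :: e :: rest) m = bcl (.V i j :: e :: rest) v) ↔
                  (m % 2 = 0 ∧ bcl (e :: rest) m = bcl (e :: rest) v)))]
            by_cases hc : bcl (.V i j :: e :: rest) j = bcl (.V i j :: e :: rest) v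
            · rw [if_pos ⟨hj', hc⟩]
              rw [Nat.even_iff] at hE ⊢
              omega
            · rw [if_neg (fun h => hc h.2)]
              rw [Nat.even_iff] at hE ⊢
              omega
          · -- split off a new singleton cluster
            have hg := b_V_even_nopart (i := i) hR hj' hp
            have hnew : ∀ u, ({(e :: rest).length + 1} : Finset ℕ) ≠ bcl (e :: rest) u :=
              fun u => newC_ne (Finset.mem_singleton_self _) u
            have hjM : j ∉ M := fun h => hp (parts_iff_shape.mpr (by
              rw [hsR]
              exact Multiset.mem_cons_of_mem (Multiset.mem_cons_of_mem (by
                have : j ≠ j - 1 := by omega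
                exact h))))
            by_cases hvj : v = j
            · have hgv : bcl (.V i j :: e :: rest) v = {(e :: rest).length + 1} := by
                rw [hvj, hg j, if_pos rfl]
              have hgj : bcl (.V i j :: e :: rest) j = {(e :: rest).length + 1} := by
                rw [hg j, if_pos rfl]
              rw [hsT, card_filter_cons, if_pos ⟨hj', hgj.trans hgv.symm⟩,
                card_filter_cons, if_pos ⟨hj', hgj.trans hgv.symm⟩]
              have hM0 : Multiset.filter
                  (fun m => m % 2 = 0 ∧ bcl (.V i j :: e :: rest) m = bcl (.V i j :: e :: rest) v)
                  M = 0 := by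
                rw [Multiset.filter_eq_nil]
                rintro m hm ⟨_, heq⟩
                rw [hg m, if_neg (fun (h : m = j) => hjM (h ▸ hm)), hgv] at heq
                exact hnew m heq.symm
              rw [hM0]
              decide
            · have hgv : bcl (.V i j :: e :: rest) v = bcl (e :: rest) v := by
                rw [hg v, if_neg hvj]
              have hvne' : bcl (e :: rest) v ≠ bcl (e :: rest) 0 := by
                intro h
                apply hvne
                rw [hgv, hg 0, if_neg (by omega)]
                exact h
              have hE := IH v hv hvne'
              have hpj : ¬(j % 2 = 0 ∧
                  bcl (.V i j :: e :: rest) j = bcl (.V i j :: e :: rest) v) := by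
                rintro ⟨_, heq⟩
                rw [hgv, hg j, if_pos rfl] at heq
                exact hnew v heq
              rw [hsT, card_filter_cons, if_neg hpj, card_filter_cons, if_neg hpj,
                Multiset.filter_congr (fun m (hm : m ∈ M) => by
                  rw [hgv, hg m, if_neg (fun (h : m = j) => hjM (h ▸ hm))] :
                  ∀ m ∈ M, ((m % 2 = 0 ∧ bcl (.V i j :: e :: rest) m = bcl (.V i j :: e :: rest) v) ↔
                    (m % 2 = 0 ∧ bcl (e :: rest) m = bcl (e :: rest) v)))]
              rw [hsR, card_filter_cons, if_neg (fun h => by omega),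
                card_filter_cons, if_neg (fun h => by omega), zero_add, zero_add] at hE
              rw [Nat.even_iff] at hE ⊢
              omega
        · -- (V, odd): type (I−)
          have hj' := Nat.odd_iff.mp hj
          have hfib := fib_of_mergeself hbig (b_V_odd (i := i) hR hj')
          have hvne' : bcl (e :: rest) v ≠ bcl (e :: rest) 0 :=
            fun h => hvne ((hfib v 0).mpr h)
          have hE := IH v hv hvne'
          rcases eq_or_ne j 1 with rfl | hjne
          · have hsT := shape_V1 hstd
            rw [hsT, card_filter_cons, if_neg (fun h => by omega),
              card_filter_cons, if_neg (fun h => by omega),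
              Multiset.filter_congr (fun m (_ : m ∈ shapeOf (e :: rest)) => by
                rw [hfib m v] :
                ∀ m ∈ shapeOf (e :: rest),
                  ((m % 2 = 0 ∧ bcl (.V i 1 :: e :: rest) m = bcl (.V i 1 :: e :: rest) v) ↔
                   (m % 2 = 0 ∧ bcl (e :: rest) m = bcl (e :: rest) v))), zero_add, zero_add]
            exact hE
          · have hj3 : 3 ≤ j := by omega
            obtain ⟨M, hsT, hsR⟩ := shape_V hstd (by omega)
            rw [hsT, card_filter_cons, if_neg (fun h => by omega),
              card_filter_cons, if_neg (fun h => by omega),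
              Multiset.filter_congr (fun m (_ : m ∈ M) => by
                rw [hfib m v] :
                ∀ m ∈ M, ((m % 2 = 0 ∧ bcl (.V i j :: e :: rest) m = bcl (.V i j :: e :: rest) v) ↔
                  (m % 2 = 0 ∧ bcl (e :: rest) m = bcl (e :: rest) v))), zero_add, zero_add]
            rw [hsR, card_filter_cons, card_filter_cons] at hE
            by_cases hc : bcl (e :: rest) (j-1) = bcl (e :: rest) v
            · rw [if_pos ⟨(by omega : (j-1) % 2 = 0), hc⟩] at hE
              rw [Nat.even_iff] at hE ⊢
              omega
            · rw [if_neg (fun h => hc h.2)] at hE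
              rw [Nat.even_iff] at hE ⊢
              omega
/-! ### Final assembly -/

lemma Blam_even {ℓ : ℕ} {x : ℕ → ℕ} {w : ℕ} (hw : w ∈ Blam ℓ x) : w % 2 = 0 := by
  rw [Blam] at hw
  rcases Finset.mem_insert.mp hw with rfl | hw
  · rfl
  · obtain ⟨i, _, rfl⟩ := Finset.mem_image.mp hw
    omega

theorem stmt1' (ℓ : ℕ) (x r : ℕ → ℕ)
    (hx : ∀ i ∈ Finset.Icc 1 ℓ, ∀ j ∈ Finset.Icc 1 ℓ, i < j → x j < x i)
    (hxpos : ∀ i ∈ Finset.Icc 1 ℓ, 0 < x i)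
    (hr : ∀ i ∈ Finset.Icc 1 ℓ, 0 < r i)
    (T : List Domino) (hT : IsAdmissibleC T)
    (hcount : ∀ i ∈ Finset.Icc 1 ℓ, (shapeOf T).count (2 * x i) = r i)
    (honly : ∀ m ∈ shapeOf T, Even m → ∃ i ∈ Finset.Icc 1 ℓ, m = 2 * x i) :
    IsEvenNCP ℓ x r (fibersOf ℓ x T) := by
  have hNC := NC_all T
  have hEv := Einv_all T hT
  have h0B : (0 : ℕ) ∈ Blam ℓ x := Finset.mem_insert_self _ _
  -- fibers
  have hfilt : ∀ v u : ℕ, bcl T u = bcl T v →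
      (Blam ℓ x).filter (fun w => bcl T w = bcl T u) =
      (Blam ℓ x).filter (fun w => bcl T w = bcl T v) := by
    intro v u h
    apply Finset.filter_congr
    intro w _
    rw [h]
  have hmemfib : ∀ L, L ∈ fibersOf ℓ x T ↔
      ∃ v ∈ Blam ℓ x, L = (Blam ℓ x).filter (fun w => bcl T w = bcl T v) := by
    intro L
    rw [fibersOf]
    constructor
    · intro h
      obtain ⟨v, hv, he⟩ := Finset.mem_image.mp h
      exact ⟨v, hv, he.symm⟩
    · rintro ⟨v, hv, rfl⟩
      exact Finset.mem_image.mpr ⟨v, hv, rfl⟩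
  refine ⟨⟨⟨?_, ?_, ?_⟩, ?_⟩, ?_⟩
  · -- nonempty
    intro L hL
    obtain ⟨v, hvB, rfl⟩ := (hmemfib L).mp hL
    exact ⟨v, Finset.mem_filter.mpr ⟨hvB, rfl⟩⟩
  · -- subsets
    intro L hL
    obtain ⟨v, hvB, rfl⟩ := (hmemfib L).mp hL
    exact Finset.filter_subset _ _
  · -- unique block
    intro w hwB
    refine ⟨(Blam ℓ x).filter (fun u => bcl T u = bcl T w),
      ⟨(hmemfib _).mpr ⟨w, hwB, rfl⟩, Finset.mem_filter.mpr ⟨hwB, rfl⟩⟩, ?_⟩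
    rintro L ⟨hL, hwL⟩
    obtain ⟨v, hvB, rfl⟩ := (hmemfib L).mp hL
    have hwv : bcl T w = bcl T v := (Finset.mem_filter.mp hwL).2
    exact (hfilt v w hwv).symm
  · -- noncrossing
    intro L hL L' hL' hne a haL b haL2 c hcL d hcL2 hab hcd
    obtain ⟨v, hvB, rfl⟩ := (hmemfib L).mp hL
    obtain ⟨v', hv'B, rfl⟩ := (hmemfib L').mp hL'
    have hvv' : bcl T v ≠ bcl T v' := fun h => hne (hfilt v' v h)
    have hba : bcl T a = bcl T v := (Finset.mem_filter.mp haL).2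
    have hbb : bcl T b = bcl T v := (Finset.mem_filter.mp haL2).2
    have hbc : bcl T c = bcl T v' := (Finset.mem_filter.mp hcL).2
    have hbd : bcl T d = bcl T v' := (Finset.mem_filter.mp hcL2).2
    have ea : a % 2 = 0 := Blam_even (Finset.filter_subset _ _ haL)
    have eb : b % 2 = 0 := Blam_even (Finset.filter_subset _ _ haL2)
    have ec : c % 2 = 0 := Blam_even (Finset.filter_subset _ _ hcL)
    have ed : d % 2 = 0 := Blam_even (Finset.filter_subset _ _ hcL2)
    by_contra hcon
    push_neg at hcon
    obtain ⟨h1, h2, h3⟩ := hcon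
    obtain ⟨t, ht⟩ := h1
    rw [Finset.mem_inter, Finset.mem_Icc, Finset.mem_Icc] at ht
    obtain ⟨s, hs1, hs2⟩ := Finset.not_subset.mp h2
    rw [Finset.mem_Icc] at hs1 hs2
    obtain ⟨s', hs1', hs2'⟩ := Finset.not_subset.mp h3
    rw [Finset.mem_Icc] at hs1' hs2'
    have hcb : c ≠ b := by
      intro h
      subst h
      exact hvv' (hbb.symm.trans hbc)
    have had : a ≠ d := by
      intro h
      subst h
      exact hvv' (hba.symm.trans hbd)
    have hsplit : (a < c ∧ c < b ∧ b < d) ∨ (c < a ∧ a < d ∧ d < b) := by omega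
    rcases hsplit with ⟨o1, o2, o3⟩ | ⟨o1, o2, o3⟩
    · exact hvv' ((hba.symm.trans
        (hNC a c b d ea ec eb ed o1 o2 o3 (hba.trans hbb.symm) (hbc.trans hbd.symm))).trans hbc)
    · exact hvv' ((hba.symm.trans
        (hNC c a d b ec ea ed eb o1 o2 o3 (hbc.trans hbd.symm) (hba.trans hbb.symm)).symm).trans
        hbc)
  · -- evenness
    intro L hL h0L
    obtain ⟨v, hvB, rfl⟩ := (hmemfib L).mp hL
    have hv0 : bcl T v ≠ bcl T 0 := fun h =>
      h0L (Finset.mem_filter.mpr ⟨h0B, h.symm⟩)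
    have hvev : v % 2 = 0 := Blam_even hvB
    have hEv' := hEv v hvev hv0
    set t := (shapeOf T).filter (fun m => m % 2 = 0 ∧ bcl T m = bcl T v) with htdef
    set J := (Finset.Icc 1 ℓ).filter
      (fun j => 2 * x j ∈ (Blam ℓ x).filter (fun w => bcl T w = bcl T v)) with hJdef
    have hJIcc : ∀ j ∈ J, j ∈ Finset.Icc 1 ℓ := fun j hj => (Finset.mem_filter.mp hj).1
    have hJb : ∀ j ∈ J, bcl T (2 * x j) = bcl T v := fun j hj =>
      (Finset.mem_filter.mp ((Finset.mem_filter.mp hj).2)).2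
    have hinj : ∀ i1 ∈ J, ∀ i2 ∈ J, 2 * x i1 = 2 * x i2 → i1 = i2 := by
      intro i1 h1 i2 h2 he
      rcases lt_trichotomy i1 i2 with h | h | h
      · have := hx i1 (hJIcc _ h1) i2 (hJIcc _ h2) h; omega
      · exact h
      · have := hx i2 (hJIcc _ h2) i1 (hJIcc _ h1) h; omega
    have htfin : t.toFinset = J.image (fun j => 2 * x j) := by
      ext m
      rw [Multiset.mem_toFinset, htdef, Multiset.mem_filter, Finset.mem_image]
      constructor
      · rintro ⟨hm, hev, hbm⟩
        obtain ⟨i, hiI, rfl⟩ := honly m hm (Nat.even_iff.mpr hev)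
        refine ⟨i, ?_, rfl⟩
        rw [hJdef, Finset.mem_filter]
        refine ⟨hiI, Finset.mem_filter.mpr ⟨?_, hbm⟩⟩
        exact Finset.mem_insert_of_mem (Finset.mem_image.mpr ⟨i, hiI, rfl⟩)
      · rintro ⟨i, hiJ, rfl⟩
        have hiI := hJIcc _ hiJ
        have hpos : 0 < (shapeOf T).count (2 * x i) := by
          rw [hcount i hiI]; exact hr i hiI
        refine ⟨Multiset.count_pos.mp hpos, by omega, hJb _ hiJ⟩
    have hcards : Multiset.card t = ∑ j ∈ J, r j := by
      rw [← Multiset.toFinset_sum_count_eq, htfin, Finset.sum_image hinj]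
      apply Finset.sum_congr rfl
      intro j hj
      rw [htdef, Multiset.count_filter_of_pos ⟨by omega, hJb _ hj⟩, hcount j (hJIcc _ hj)]
    rw [← hcards]
    exact hEv'

/-- Proposition 2.12: for an admissible domino tableau `T` of type C whose shape has
distinct even parts `2x₁ > … > 2x_ℓ` with multiplicities `r₁, …, r_ℓ`, the partition of
`B_λ = {0, 2x₁, …, 2x_ℓ}` into the fibers of `b_T` over the open clusters is an even
noncrossing partition of `B_λ`. -/
theorem stmt1 (ℓ : ℕ) (x r : ℕ → ℕ)
    (hx : ∀ i ∈ Finset.Icc 1 ℓ, ∀ j ∈ Finset.Icc 1 ℓ, i < j → x j < x i)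
    (hxpos : ∀ i ∈ Finset.Icc 1 ℓ, 0 < x i)
    (hr : ∀ i ∈ Finset.Icc 1 ℓ, 0 < r i)
    (T : List Domino) (hT : IsAdmissibleC T)
    (hcount : ∀ i ∈ Finset.Icc 1 ℓ, (shapeOf T).count (2 * x i) = r i)
    (honly : ∀ m ∈ shapeOf T, Even m → ∃ i ∈ Finset.Icc 1 ℓ, m = 2 * x i) :
    IsEvenNCP ℓ x r (fibersOf ℓ x T) := by
  exact stmt1' ℓ x r hx hxpos hr T hT hcount honly
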